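/- If B1 ≻^{B0} B2, then q(B1,B0) ≤ q(B2,B0), i.e., λ_min(X(B2,B0)·X(B2,B0)ᵀ) ≤ λ_min(X(B1,B0)·X(B1,B0)ᵀ): the smallest singular value of the transition matrix is non-increasing under left multiplication by a doubly stochastic matrix. -/

import Mathlib

open Matrix

noncomputable def transMatrix {d : ℕ}
    (B C : OrthonormalBasis (Fin d) ℂ (EuclideanSpace ℂ (Fin d))) :
    Matrix (Fin d) (Fin d) ℝ :=
  Matrix.of fun i j => ‖(inner ℂ (B i) (C j) : ℂ)‖ ^ 2

def IsDoublyStochastic {d : ℕ} (M : Matrix (Fin d) (Fin d) ℝ) : Prop :=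
  (∀ i j, 0 ≤ M i j) ∧ (∀ i, ∑ j, M i j = 1) ∧ (∀ j, ∑ i, M i j = 1)

/-- `B1 ≻^{B0} B2` : there is a doubly stochastic `M` with `X(B2,B0) = M · X(B1,B0)`. -/
def BasisMaj {d : ℕ}
    (B0 B1 B2 : OrthonormalBasis (Fin d) ℂ (EuclideanSpace ℂ (Fin d))) : Prop :=
  ∃ M : Matrix (Fin d) (Fin d) ℝ, IsDoublyStochastic M ∧
    transMatrix B2 B0 = M * transMatrix B1 B0

/-- The smallest eigenvalue of a real square matrix, as the infimum of its set
of eigenvalues. -/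
noncomputable def lamMin {d : ℕ} (A : Matrix (Fin d) (Fin d) ℝ) : ℝ :=
  sInf {μ : ℝ | ∃ v : Fin d → ℝ, v ≠ 0 ∧ A.mulVec v = μ • v}

set_option synthInstance.maxHeartbeats 1000000
set_option maxHeartbeats 1000000

variable {d : ℕ}

def eigSet (A : Matrix (Fin d) (Fin d) ℝ) : Set ℝ :=
  {μ : ℝ | ∃ v : Fin d → ℝ, v ≠ 0 ∧ A.mulVec v = μ • v}

lemma mem_eigSet_iff (A : Matrix (Fin d) (Fin d) ℝ) (μ : ℝ) :
    μ ∈ eigSet A ↔ Module.End.HasEigenvalue (Matrix.toEuclideanLin A) μ := by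
  rw [Module.End.hasEigenvalue_iff, Submodule.ne_bot_iff]
  constructor
  · rintro ⟨v, hv, hAv⟩
    refine ⟨(WithLp.equiv 2 _).symm v, ?_, by simpa using hv⟩
    rw [Module.End.mem_eigenspace_iff, Matrix.toEuclideanLin_apply]
    simp [hAv]
  · rintro ⟨x, hx, hx0⟩
    rw [Module.End.mem_eigenspace_iff, Matrix.toEuclideanLin_apply] at hx
    refine ⟨WithLp.equiv 2 _ x, by simpa using hx0, ?_⟩
    have := congrArg (WithLp.equiv 2 (Fin d → ℝ)) hx
    simpa using this

noncomputable def rayInf (S : Matrix (Fin d) (Fin d) ℝ) : ℝ :=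
  ⨅ x : {x : EuclideanSpace ℝ (Fin d) // x ≠ 0},
    (inner ℝ ((Matrix.toEuclideanLin S) (x : EuclideanSpace ℝ (Fin d)))
      (x : EuclideanSpace ℝ (Fin d)) : ℝ) / ‖(x : EuclideanSpace ℝ (Fin d))‖ ^ 2

lemma ray_bddBelow (S : Matrix (Fin d) (Fin d) ℝ) :
    BddBelow (Set.range fun x : {x : EuclideanSpace ℝ (Fin d) // x ≠ 0} =>
      (inner ℝ ((Matrix.toEuclideanLin S) (x : EuclideanSpace ℝ (Fin d)))
        (x : EuclideanSpace ℝ (Fin d)) : ℝ) / ‖(x : EuclideanSpace ℝ (Fin d))‖ ^ 2) := by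
  set T := (Matrix.toEuclideanLin S).toContinuousLinearMap
  refine ⟨-‖T‖, ?_⟩
  rintro _ ⟨x, rfl⟩
  have hx : (0:ℝ) < ‖(x : EuclideanSpace ℝ (Fin d))‖ ^ 2 :=
    pow_pos (norm_pos_iff.2 x.2) 2
  rw [le_div_iff₀ hx]
  have h1 : |(inner ℝ ((Matrix.toEuclideanLin S) (x : EuclideanSpace ℝ (Fin d)))
      (x : EuclideanSpace ℝ (Fin d)) : ℝ)| ≤
      ‖(Matrix.toEuclideanLin S) (x : EuclideanSpace ℝ (Fin d))‖ *
        ‖(x : EuclideanSpace ℝ (Fin d))‖ := abs_real_inner_le_norm _ _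
  have h2 : ‖(Matrix.toEuclideanLin S) (x : EuclideanSpace ℝ (Fin d))‖ ≤
      ‖T‖ * ‖(x : EuclideanSpace ℝ (Fin d))‖ := by
    have := T.le_opNorm (x : EuclideanSpace ℝ (Fin d))
    simpa [T] using this
  have h3 : (0:ℝ) ≤ ‖(x : EuclideanSpace ℝ (Fin d))‖ := norm_nonneg _
  nlinarith [abs_nonneg (inner ℝ ((Matrix.toEuclideanLin S) (x : EuclideanSpace ℝ (Fin d)))
      (x : EuclideanSpace ℝ (Fin d)) : ℝ), neg_abs_le (inner ℝ ((Matrix.toEuclideanLin S) (x : EuclideanSpace ℝ (Fin d)))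
      (x : EuclideanSpace ℝ (Fin d)) : ℝ)]

lemma rayleigh_of_eigen {μ : ℝ} {x : EuclideanSpace ℝ (Fin d)}
    {S : Matrix (Fin d) (Fin d) ℝ} (hx : x ≠ 0)
    (h : (Matrix.toEuclideanLin S) x = μ • x) :
    (inner ℝ ((Matrix.toEuclideanLin S) x) x : ℝ) / ‖x‖ ^ 2 = μ := by
  rw [h, real_inner_smul_left, real_inner_self_eq_norm_sq]
  have : ‖x‖ ≠ 0 := norm_ne_zero_iff.2 hx
  field_simp

lemma lamMin_eq_rayInf (hd : 0 < d) {S : Matrix (Fin d) (Fin d) ℝ}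
    (hS : S.IsHermitian) : lamMin S = rayInf S := by
  haveI : Nonempty (Fin d) := ⟨⟨0, hd⟩⟩
  haveI : Nontrivial (EuclideanSpace ℝ (Fin d)) := by
    refine ⟨0, (WithLp.equiv 2 _).symm (fun _ => 1), fun hcontra => ?_⟩
    have := congrArg (fun z => WithLp.equiv 2 (Fin d → ℝ) z ⟨0, hd⟩) hcontra
    simpa using this
  have hsym : (Matrix.toEuclideanLin S).IsSymmetric :=
    Matrix.isHermitian_iff_isSymmetric.1 hS
  have hmem : rayInf S ∈ eigSet S := by
    rw [mem_eigSet_iff]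
    have hEV := hsym.hasEigenvalue_iInf_of_finiteDimensional
    have hco : (↑(⨅ x : {x : EuclideanSpace ℝ (Fin d) // x ≠ 0},
        RCLike.re (inner ℝ ((Matrix.toEuclideanLin S) (x : EuclideanSpace ℝ (Fin d)))
          (x : EuclideanSpace ℝ (Fin d)) : ℝ) / ‖(x : EuclideanSpace ℝ (Fin d))‖ ^ 2) : ℝ)
        = rayInf S := by
      simp only [RCLike.re_to_real, RCLike.ofReal_real_eq_id, id]
      rfl
    rwa [hco] at hEV
  have hlow : ∀ μ ∈ eigSet S, rayInf S ≤ μ := by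
    rintro μ ⟨v, hv, hAv⟩
    set x : EuclideanSpace ℝ (Fin d) := (WithLp.equiv 2 _).symm v with hxdef
    have hx0 : x ≠ 0 := by simpa [hxdef] using hv
    have hTx : (Matrix.toEuclideanLin S) x = μ • x := by
      rw [Matrix.toEuclideanLin_apply]
      simp [hxdef, hAv]
    exact (ciInf_le (ray_bddBelow S)
      (⟨x, hx0⟩ : {x : EuclideanSpace ℝ (Fin d) // x ≠ 0})).trans
      (le_of_eq (rayleigh_of_eigen hx0 hTx))
  exact le_antisymm (csInf_le ⟨rayInf S, hlow⟩ hmem) (le_csInf ⟨_, hmem⟩ hlow)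

lemma eigSet_mul_transpose_subset (X : Matrix (Fin d) (Fin d) ℝ) :
    eigSet (X * Xᵀ) ⊆ eigSet (Xᵀ * X) := by
  rintro μ ⟨v, hv, hAv⟩
  by_cases h : Xᵀ *ᵥ v = 0
  · have hμ : μ = 0 := by
      have h2 : μ • v = 0 := by
        rw [← hAv, ← Matrix.mulVec_mulVec, h, Matrix.mulVec_zero]
      rcases smul_eq_zero.mp h2 with h' | h'
      · exact h'
      · exact absurd h' hv
    have hdet : Xᵀ.det = 0 := Matrix.exists_mulVec_eq_zero_iff.mp ⟨v, hv, h⟩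
    have hdet2 : (Xᵀ * X).det = 0 := by
      rw [Matrix.det_mul, hdet, zero_mul]
    obtain ⟨w, hw, hw0⟩ := Matrix.exists_mulVec_eq_zero_iff.mpr hdet2
    exact ⟨w, hw, by rw [hw0, hμ, zero_smul]⟩
  · refine ⟨Xᵀ *ᵥ v, h, ?_⟩
    calc (Xᵀ * X) *ᵥ (Xᵀ *ᵥ v) = Xᵀ *ᵥ ((X * Xᵀ) *ᵥ v) := by
          rw [Matrix.mulVec_mulVec, Matrix.mulVec_mulVec, Matrix.mul_assoc]
      _ = μ • (Xᵀ *ᵥ v) := by rw [hAv, Matrix.mulVec_smul]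

lemma eigSet_mul_transpose (X : Matrix (Fin d) (Fin d) ℝ) :
    eigSet (X * Xᵀ) = eigSet (Xᵀ * X) := by
  refine subset_antisymm (eigSet_mul_transpose_subset X) ?_
  have := eigSet_mul_transpose_subset Xᵀ
  rwa [Matrix.transpose_transpose] at this

lemma lamMin_eq_sInf_eigSet (A : Matrix (Fin d) (Fin d) ℝ) :
    lamMin A = sInf (eigSet A) := rfl

lemma lamMin_mul_transpose (X : Matrix (Fin d) (Fin d) ℝ) :
    lamMin (X * Xᵀ) = lamMin (Xᵀ * X) := by
  rw [lamMin_eq_sInf_eigSet, lamMin_eq_sInf_eigSet, eigSet_mul_transpose]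

lemma ds_sq_sum_le {M : Matrix (Fin d) (Fin d) ℝ} (hM : IsDoublyStochastic M)
    (y : Fin d → ℝ) : ∑ i, ((M *ᵥ y) i) ^ 2 ≤ ∑ j, (y j) ^ 2 := by
  obtain ⟨h0, hrow, hcol⟩ := hM
  calc ∑ i, ((M *ᵥ y) i) ^ 2 ≤ ∑ i, ∑ j, M i j * (y j) ^ 2 := by
        refine Finset.sum_le_sum fun i _ => ?_
        have hcs := Finset.sum_sq_le_sum_mul_sum_of_sq_eq_mul Finset.univ
          (r := fun j => M i j * y j) (f := fun j => M i j)
          (g := fun j => M i j * (y j) ^ 2)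
          (fun j _ => h0 i j) (fun j _ => mul_nonneg (h0 i j) (sq_nonneg _))
          (fun j _ => by ring)
        simpa [Matrix.mulVec, dotProduct, hrow i] using hcs
      _ = ∑ j, (∑ i, M i j) * (y j) ^ 2 := by
        rw [Finset.sum_comm]
        simp [Finset.sum_mul]
      _ = ∑ j, (y j) ^ 2 := by simp [hcol]

lemma inner_transpose_mul_self (X : Matrix (Fin d) (Fin d) ℝ)
    (x : EuclideanSpace ℝ (Fin d)) :
    (inner ℝ ((Matrix.toEuclideanLin (Xᵀ * X)) x) x : ℝ)
      = ∑ i, ((X *ᵥ (WithLp.equiv 2 (Fin d → ℝ) x)) i) ^ 2 := by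
  set v : Fin d → ℝ := WithLp.equiv 2 (Fin d → ℝ) x with hv
  have h1 : (inner ℝ ((Matrix.toEuclideanLin (Xᵀ * X)) x) x : ℝ)
      = ((Xᵀ * X) *ᵥ v) ⬝ᵥ v := by
    rw [Matrix.toEuclideanLin_apply, PiLp.inner_apply]
    simp [dotProduct, mul_comm, hv]
  rw [h1, ← Matrix.mulVec_mulVec, Matrix.mulVec_transpose,
    ← Matrix.dotProduct_mulVec]
  simp [dotProduct, sq]

lemma isHermitian_transpose_mul_self_real (X : Matrix (Fin d) (Fin d) ℝ) :
    (Xᵀ * X).IsHermitian := by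
  have := Matrix.isHermitian_conjTranspose_mul_self X
  rwa [Matrix.conjTranspose_eq_transpose_of_trivial] at this

lemma eigSet_empty (A : Matrix (Fin 0) (Fin 0) ℝ) : eigSet A = ∅ := by
  ext μ
  simp only [Set.mem_empty_iff_false, iff_false]
  rintro ⟨v, hv, -⟩
  exact hv (Subsingleton.elim v 0)

/-- If `B1 ≻^{B0} B2` then `q(B1,B0) ≤ q(B2,B0)`, i.e.
`λ_min(X(B2,B0)·X(B2,B0)ᵀ) ≤ λ_min(X(B1,B0)·X(B1,B0)ᵀ)`. -/
theorem basisMaj_lamMin_le {d : ℕ}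
    (B0 B1 B2 : OrthonormalBasis (Fin d) ℂ (EuclideanSpace ℂ (Fin d)))
    (h : BasisMaj B0 B1 B2) :
    lamMin (transMatrix B2 B0 * (transMatrix B2 B0)ᵀ) ≤
      lamMin (transMatrix B1 B0 * (transMatrix B1 B0)ᵀ) := by
  obtain ⟨M, hM, hC⟩ := h
  set A := transMatrix B1 B0 with hA
  set C := transMatrix B2 B0 with hCdef
  rcases Nat.eq_zero_or_pos d with hd | hd
  · subst hd
    rw [lamMin_eq_sInf_eigSet, lamMin_eq_sInf_eigSet, eigSet_empty, eigSet_empty]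
  · rw [lamMin_mul_transpose C, lamMin_mul_transpose A,
      lamMin_eq_rayInf hd (isHermitian_transpose_mul_self_real C),
      lamMin_eq_rayInf hd (isHermitian_transpose_mul_self_real A)]
    refine ciInf_mono (ray_bddBelow _) ?_
    rintro ⟨x, hx⟩
    have hnum : (inner ℝ ((Matrix.toEuclideanLin (Cᵀ * C)) x) x : ℝ)
        ≤ (inner ℝ ((Matrix.toEuclideanLin (Aᵀ * A)) x) x : ℝ) := by
      rw [inner_transpose_mul_self, inner_transpose_mul_self]
      set v : Fin d → ℝ := WithLp.equiv 2 (Fin d → ℝ) x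
      have hCv : C *ᵥ v = M *ᵥ (A *ᵥ v) := by
        rw [hC, ← Matrix.mulVec_mulVec]
      rw [hCv]
      exact ds_sq_sum_le hM (A *ᵥ v)
    have hden : (0:ℝ) ≤ ‖x‖ ^ 2 := sq_nonneg _
    gcongr
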